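/- With f as the Riemann-integrable fixed point of the Read-Bajraktarević operator, f solves the histopolation problem ∫_{t_{j-1}}^{t_j} f(t) dt = y_j a_j (t_N − t₀) for all j if and only if d_j = [2 y_j (t_N − t₀) − c_j (t_N² − t₀²) − 2 δ_j ∫_{t₀}^{t_N} s_j(f(t)) dt] / (2(t_N − t₀)) for all j. -/
import Mathlib


/-- The fixed point `f` of the Read-Bajraktarević operator solves the
histopolation problem `∫_{t_{j-1}}^{t_j} f = y_j a_j (t_N − t₀)` for all `j`
if and only if each `d_j` is given by the stated formula. -/
theorem histopolation_iff (N : ℕ) (hN : 1 ≤ N) (t : ℕ → ℝ)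
    (ht : ∀ j < N, t j < t (j + 1))
    (a b c d δ y : ℕ → ℝ) (s : ℕ → ℝ → ℝ)
    (hl0 : ∀ j ∈ Finset.Icc 1 N, a j * t 0 + b j = t (j - 1))
    (hlN : ∀ j ∈ Finset.Icc 1 N, a j * t N + b j = t j)
    (f : ℝ → ℝ)
    (hf : ∀ j ∈ Finset.Icc 1 N, ∀ u ∈ Set.Icc (t 0) (t N),
      a j * u + b j ∈ (if j = N then Set.Icc (t (N - 1)) (t N)
        else Set.Ico (t (j - 1)) (t j)) →
      f (a j * u + b j) = c j * u + δ j * s j (f u) + d j)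
    (hfint : IntervalIntegrable f MeasureTheory.volume (t 0) (t N))
    (hsfint : ∀ j ∈ Finset.Icc 1 N,
      IntervalIntegrable (fun u => s j (f u)) MeasureTheory.volume (t 0) (t N)) :
    (∀ j ∈ Finset.Icc 1 N,
        ∫ x in (t (j - 1))..(t j), f x = y j * a j * (t N - t 0)) ↔
    (∀ j ∈ Finset.Icc 1 N,
        d j = (2 * y j * (t N - t 0) - c j * ((t N) ^ 2 - (t 0) ^ 2) -
          2 * δ j * ∫ u in (t 0)..(t N), s j (f u)) / (2 * (t N - t 0))) := by
  -- t is increasing from 0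
  have h0N : ∀ k, 1 ≤ k → k ≤ N → t 0 < t k := by
    intro k hk1 hkN
    induction k with
    | zero => omega
    | succ n ih =>
      rcases Nat.eq_zero_or_pos n with h | h
      · subst h; simpa using ht 0 (by omega)
      · exact lt_trans (ih h (by omega)) (ht n (by omega))
  have hT : t 0 < t N := h0N N hN le_rfl
  have hTne : t N - t 0 ≠ 0 := by linarith
  -- Key computation of the integral over each subinterval
  have key : ∀ j ∈ Finset.Icc 1 N,
      ∫ x in (t (j - 1))..(t j), f x =
        a j * (c j * ((t N) ^ 2 - (t 0) ^ 2) / 2 +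
          δ j * (∫ u in (t 0)..(t N), s j (f u)) + d j * (t N - t 0)) := by
    intro j hj
    obtain ⟨hj1, hjN⟩ := Finset.mem_Icc.mp hj
    have htj : t (j - 1) < t j := by
      have := ht (j - 1) (by omega)
      rwa [Nat.sub_add_cancel hj1] at this
    have hl0j := hl0 j hj
    have hlNj := hlN j hj
    have haj : 0 < a j := by nlinarith
    -- the composed function equals the affine expression a.e.
    have hcong : (∫ u in (t 0)..(t N), f (a j * u + b j)) =
        ∫ u in (t 0)..(t N), (c j * u + δ j * s j (f u) + d j) := by
      apply intervalIntegral.integral_congr_ae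
      have hne : ∀ᵐ x : ℝ ∂MeasureTheory.volume, x ≠ t N := by
        rw [MeasureTheory.ae_iff]
        simp only [ne_eq, not_not, Set.setOf_eq_eq_singleton]
        exact MeasureTheory.measure_singleton (t N)
      filter_upwards [hne] with x hx hxmem
      rw [Set.uIoc_of_le hT.le] at hxmem
      have hxlt : x < t N := lt_of_le_of_ne hxmem.2 hx
      have hxIcc : x ∈ Set.Icc (t 0) (t N) := ⟨hxmem.1.le, hxmem.2⟩
      apply hf j hj x hxIcc
      by_cases hjeq : j = N
      · subst hjeq
        simp only [if_pos rfl]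
        constructor
        · rw [← hl0j]; nlinarith [hxmem.1]
        · rw [← hlNj]; nlinarith [hxmem.2]
      · rw [if_neg hjeq]
        constructor
        · rw [← hl0j]; nlinarith [hxmem.1]
        · rw [← hlNj]; nlinarith
    -- substitution
    have hsub := intervalIntegral.integral_comp_mul_add f haj.ne' (b j)
      (a := t 0) (b := t N)
    rw [hl0j, hlNj, hcong] at hsub
    -- compute the RHS integral
    have hg1 : IntervalIntegrable (fun u : ℝ => c j * u) MeasureTheory.volume
        (t 0) (t N) := (continuous_const.mul continuous_id).intervalIntegrable _ _
    have hg2 : IntervalIntegrable (fun u : ℝ => δ j * s j (f u))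
        MeasureTheory.volume (t 0) (t N) := (hsfint j hj).const_mul (δ j)
    have hg3 : IntervalIntegrable (fun _ : ℝ => d j) MeasureTheory.volume
        (t 0) (t N) := intervalIntegrable_const
    rw [intervalIntegral.integral_add (hg1.add hg2) hg3,
      intervalIntegral.integral_add hg1 hg2,
      intervalIntegral.integral_const_mul, intervalIntegral.integral_const_mul,
      integral_id, intervalIntegral.integral_const] at hsub
    have : (∫ x in (t (j - 1))..(t j), f x) =
        a j * (c j * (t N ^ 2 - t 0 ^ 2) / 2 +
          δ j * (∫ u in (t 0)..(t N), s j (f u)) + (t N - t 0) * d j) := by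
      have h2 := congrArg (fun z => a j * z) hsub
      simp only [smul_eq_mul] at h2 ⊢
      field_simp at h2
      linarith [h2]
    rw [this]; ring
  constructor
  · intro h j hj
    obtain ⟨hj1, hjN⟩ := Finset.mem_Icc.mp hj
    have htj : t (j - 1) < t j := by
      have := ht (j - 1) (by omega)
      rwa [Nat.sub_add_cancel hj1] at this
    have hl0j := hl0 j hj
    have hlNj := hlN j hj
    have haj : 0 < a j := by nlinarith
    have h1 := h j hj
    rw [key j hj] at h1
    have h2 : c j * (t N ^ 2 - t 0 ^ 2) / 2 +
        δ j * (∫ u in (t 0)..(t N), s j (f u)) + d j * (t N - t 0) =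
        y j * (t N - t 0) := by
      have := mul_left_cancel₀ haj.ne' (by linarith [h1] : a j *
        (c j * (t N ^ 2 - t 0 ^ 2) / 2 +
          δ j * (∫ u in (t 0)..(t N), s j (f u)) + d j * (t N - t 0)) =
        a j * (y j * (t N - t 0)))
      linarith [this]
    field_simp
    linarith [h2]
  · intro h j hj
    rw [key j hj, h j hj]
    field_simp
    ring
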